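/- arXiv:2201.02390 — 2 statements merged into one kernel-verified Lean document; each statement's English description precedes it below -/
import Mathlib

section
/- Let F : ℝ^{N-1} → ℝ be κ-Lipschitz, β > 0, a > √(1+κ²), and let Σ_β = {(β+F(x'), x') : |x'| < r} be the shifted graph surface (r large relative to aβ). If y lies between the graph of F and Σ_β (i.e. F(y') < y₁ < β + F(y')) with |y'| < r/2, then there exist constants c₁, c₂ > 0 depending only on κ, a, N (not on β, y, F) such that c₁ β ≤ ∫_{Σ_β ∩ B(y, aβ)} |x−y|^{2−N} dH^{N−1}(x) ≤ c₂ β. -/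
open MeasureTheory Metric

/-- The point `(t, x) ∈ ℝ^{n+1}`. -/
noncomputable def pt {n : ℕ} (t : ℝ) (x : EuclideanSpace ℝ (Fin n)) :
    EuclideanSpace ℝ (Fin (n + 1)) :=
  (EuclideanSpace.equiv (Fin (n + 1)) ℝ).symm
    (Fin.cons t ((EuclideanSpace.equiv (Fin n) ℝ) x))

section Aux

open Set
open scoped NNReal ENNReal

lemma pt_sub {n : ℕ} (t s : ℝ) (x y : EuclideanSpace ℝ (Fin n)) :
    pt t x - pt s y = pt (t - s) (x - y) := by
  ext i
  induction i using Fin.cases with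
  | zero => rfl
  | succ i => rfl

lemma norm_pt_sq {n : ℕ} (t : ℝ) (x : EuclideanSpace ℝ (Fin n)) :
    ‖pt t x‖ ^ 2 = t ^ 2 + ‖x‖ ^ 2 := by
  rw [EuclideanSpace.norm_eq, EuclideanSpace.norm_eq, Real.sq_sqrt (by positivity),
    Real.sq_sqrt (by positivity), Fin.sum_univ_succ]
  simp only [show ∀ i : Fin n, pt t x i.succ = x i from fun _ => rfl,
    show pt t x 0 = t from rfl]
  simp [sq_abs]

lemma euclid_nontrivial {n : ℕ} (hn : 1 ≤ n) : Nontrivial (EuclideanSpace ℝ (Fin n)) := by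
  refine ⟨⟨EuclideanSpace.single (⟨0, by omega⟩ : Fin n) (1 : ℝ), 0, ?_⟩⟩
  intro h
  have := congrArg (fun v => v (⟨0, by omega⟩ : Fin n)) h
  simp [EuclideanSpace.single_apply] at this

lemma haus_pi (n : ℕ) :
    (Measure.hausdorffMeasure ((n : ℕ) : ℝ) : Measure (Fin n → ℝ)) = volume := by
  have := hausdorffMeasure_pi_real (ι := Fin n)
  simpa using this

lemma vol_image_me {n : ℕ} {s : Set (EuclideanSpace ℝ (Fin n))} (hs : MeasurableSet s) :
    volume ((MeasurableEquiv.toLp 2 (Fin n → ℝ)).symm '' s) = volume s := by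
  have h := (EuclideanSpace.volume_preserving_symm_measurableEquiv_toLp (Fin n)).measure_preimage
    (((MeasurableEquiv.toLp 2 (Fin n → ℝ)).symm.measurableSet_image).2 hs).nullMeasurableSet
  rw [Set.preimage_image_eq s (MeasurableEquiv.toLp 2 (Fin n → ℝ)).symm.injective] at h
  exact h.symm

lemma vol_le_haus (n : ℕ) :
    (volume : Measure (EuclideanSpace ℝ (Fin n))) ≤ Measure.hausdorffMeasure (n : ℝ) := by
  rw [Measure.le_iff]
  intro s hs
  have h2 := (PiLp.lipschitzWith_ofLp 2 (fun _ : Fin n => ℝ)).hausdorffMeasure_image_le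
    (d := (n : ℝ)) (by positivity) s
  calc volume s = volume ((MeasurableEquiv.toLp 2 (Fin n → ℝ)).symm '' s) :=
        (vol_image_me hs).symm
    _ = Measure.hausdorffMeasure (n : ℝ) ((MeasurableEquiv.toLp 2 (Fin n → ℝ)).symm '' s) := by
        rw [haus_pi n]
    _ ≤ Measure.hausdorffMeasure (n : ℝ) s := by
        rw [MeasurableEquiv.coe_toLp_symm]
        simpa using h2

lemma haus_le_vol (n : ℕ) :
    (Measure.hausdorffMeasure (n : ℝ) : Measure (EuclideanSpace ℝ (Fin n))) ≤
      (((n : ℝ≥0) ^ ((1 / (2 : ℝ≥0∞)).toReal) : ℝ≥0) : ℝ≥0∞) ^ (n : ℝ) • volume := by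
  rw [Measure.le_iff]
  intro s hs
  have h2 := (PiLp.antilipschitzWith_ofLp 2 (fun _ : Fin n => ℝ)).le_hausdorffMeasure_image
    (d := (n : ℝ)) (by positivity) s
  simp only [Fintype.card_fin] at h2
  rw [Measure.smul_apply, smul_eq_mul]
  refine h2.trans ?_
  gcongr
  have h3 : (Measure.hausdorffMeasure (n : ℝ) : Measure (Fin n → ℝ))
      (WithLp.ofLp '' s) = volume s := by
    rw [haus_pi n, ← MeasurableEquiv.coe_toLp_symm, vol_image_me hs]
  exact le_of_eq h3

lemma translate_ball {n : ℕ} (y' : EuclideanSpace ℝ (Fin n)) (R e : ℝ) :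
    ∫⁻ u in ball y' R, ENNReal.ofReal (‖u - y'‖ ^ e) ∂volume
      = ∫⁻ u in ball (0 : EuclideanSpace ℝ (Fin n)) R, ENNReal.ofReal (‖u‖ ^ e) ∂volume := by
  rw [← lintegral_indicator measurableSet_ball, ← lintegral_indicator measurableSet_ball,
    ← lintegral_add_right_eq_self
      (fun x => (ball y' R).indicator (fun u => ENNReal.ofReal (‖u - y'‖ ^ e)) x) y']
  congr 1
  funext x
  by_cases hx : x ∈ ball (0 : EuclideanSpace ℝ (Fin n)) R
  · have hx0 : ‖x‖ < R := by rwa [mem_ball, dist_zero_right] at hx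
    have hx' : x + y' ∈ ball y' R := by
      rw [mem_ball, dist_eq_norm, add_sub_cancel_right]; exact hx0
    simp [Set.indicator_of_mem hx, Set.indicator_of_mem hx', add_sub_cancel_right]
  · have hx0 : ¬ (‖x‖ < R) := by rwa [mem_ball, dist_zero_right] at hx
    have hx' : x + y' ∉ ball y' R := by
      rw [mem_ball, dist_eq_norm, add_sub_cancel_right]; exact hx0
    simp [Set.indicator_of_notMem hx, Set.indicator_of_notMem hx']

lemma key_ball {n : ℕ} (hn2 : 2 ≤ n) {R : ℝ} (hR : 0 < R) :
    ∫⁻ u in ball (0 : EuclideanSpace ℝ (Fin n)) R,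
        ENNReal.ofReal (‖u‖ ^ (1 - (n : ℝ))) ∂volume
      ≤ volume (ball (0 : EuclideanSpace ℝ (Fin n)) 1) * ENNReal.ofReal n * ENNReal.ofReal R := by
  haveI : Nontrivial (EuclideanSpace ℝ (Fin n)) := euclid_nontrivial (by omega)
  set E' := EuclideanSpace ℝ (Fin n)
  set mB := volume (ball (0 : E') 1) with hmBdef
  have hmBtop : mB ≠ ⊤ := measure_ball_lt_top.ne
  set e : ℝ := 1 - (n : ℝ) with he
  have hn2' : (2 : ℝ) ≤ (n : ℝ) := by exact_mod_cast hn2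
  have he0 : e < 0 := by rw [he]; linarith
  have hene : e ≠ 0 := ne_of_lt he0
  have hfr : Module.finrank ℝ E' = n := finrank_euclideanSpace_fin
  have hmble : Measurable fun u : E' => ‖u‖ ^ e := by fun_prop
  set μ0 := volume.restrict (ball (0 : E') R) with hμ0
  rw [show (∫⁻ u in ball (0 : E') R, ENNReal.ofReal (‖u‖ ^ e) ∂volume)
      = ∫⁻ u, ENNReal.ofReal (‖u‖ ^ e) ∂μ0 from rfl,
    lintegral_eq_lintegral_meas_lt μ0
      (Filter.Eventually.of_forall fun u => Real.rpow_nonneg (norm_nonneg u) e)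
      hmble.aemeasurable]
  set t₀ : ℝ := R ^ e with ht₀
  have ht₀pos : 0 < t₀ := Real.rpow_pos_of_pos hR e
  have hsplit : Ioi (0 : ℝ) ⊆ Ioc 0 t₀ ∪ Ioi t₀ := fun t ht =>
    (le_or_gt t t₀).imp (fun h => ⟨ht, h⟩) id
  refine le_trans (le_trans (lintegral_mono_set hsplit) (lintegral_union_le _ _ _)) ?_
  have hballR : volume (ball (0 : E') R) = ENNReal.ofReal (R ^ n) * mB := by
    rw [Measure.addHaar_ball _ _ hR.le, hfr]
  -- piece 1
  have hp1 : (∫⁻ t in Ioc 0 t₀, μ0 {a : E' | t < ‖a‖ ^ e} ∂volume)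
      ≤ mB * ENNReal.ofReal R := by
    have hb : ∀ t ∈ Ioc (0:ℝ) t₀, μ0 {a : E' | t < ‖a‖ ^ e} ≤ ENNReal.ofReal (R ^ n) * mB :=
      fun t _ => le_trans (le_trans (measure_mono (subset_univ _))
        (le_of_eq (Measure.restrict_apply_univ _))) (le_of_eq hballR)
    calc (∫⁻ t in Ioc 0 t₀, μ0 {a : E' | t < ‖a‖ ^ e} ∂volume)
        ≤ ∫⁻ _ in Ioc (0:ℝ) t₀, ENNReal.ofReal (R ^ n) * mB ∂volume :=
          setLIntegral_mono measurable_const hb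
      _ = ENNReal.ofReal (R ^ n) * mB * ENNReal.ofReal t₀ := by
          rw [setLIntegral_const, Real.volume_Ioc, sub_zero]
      _ = mB * (ENNReal.ofReal (R ^ n) * ENNReal.ofReal t₀) := by ring
      _ = mB * ENNReal.ofReal R := by
          rw [← ENNReal.ofReal_mul (by positivity)]
          congr 1
          rw [ht₀, ← Real.rpow_natCast R n, ← Real.rpow_add hR]
          norm_num [he]
  -- piece 2
  set a' : ℝ := e⁻¹ * (n : ℝ) with ha'def
  have ha' : a' < -1 := by
    have h1 : (n : ℝ) / e < -1 := by
      rw [div_lt_iff_of_neg he0]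
      rw [he]; ring_nf; linarith
    rw [ha'def, inv_mul_eq_div]
    exact h1
  have hp2 : (∫⁻ t in Ioi t₀, μ0 {a : E' | t < ‖a‖ ^ e} ∂volume)
      ≤ ENNReal.ofReal (R * ((n : ℝ) - 1)) * mB := by
    have hb : ∀ t ∈ Ioi t₀, μ0 {a : E' | t < ‖a‖ ^ e} ≤ ENNReal.ofReal (t ^ a') * mB := by
      intro t ht
      have htpos : 0 < t := ht₀pos.trans ht
      have hsub : {a : E' | t < ‖a‖ ^ e} ⊆ closedBall (0 : E') (t ^ e⁻¹) := by
        intro u hu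
        have hu' : t < ‖u‖ ^ e := hu
        have hupos : 0 < ‖u‖ := by
          rcases eq_or_lt_of_le (norm_nonneg u) with h | h
          · exfalso; rw [← h, Real.zero_rpow hene] at hu'; linarith
          · exact h
        rw [mem_closedBall, dist_zero_right]
        have := Real.rpow_le_rpow_of_nonpos htpos hu'.le (inv_nonpos.mpr he0.le)
        rwa [Real.rpow_rpow_inv (norm_nonneg u) hene] at this
      calc μ0 {a : E' | t < ‖a‖ ^ e} ≤ volume {a : E' | t < ‖a‖ ^ e} :=
            Measure.restrict_le_self _
        _ ≤ volume (closedBall (0 : E') (t ^ e⁻¹)) := measure_mono hsub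
        _ = ENNReal.ofReal ((t ^ e⁻¹) ^ n) * mB := by
            rw [Measure.addHaar_closedBall _ _ (Real.rpow_nonneg htpos.le _), hfr]
        _ = ENNReal.ofReal (t ^ a') * mB := by
            rw [← Real.rpow_natCast (t ^ e⁻¹) n, ← Real.rpow_mul htpos.le]
    have hval : (∫ t in Ioi t₀, t ^ a') = R * ((n : ℝ) - 1) := by
      rw [integral_Ioi_rpow_of_lt ha' ht₀pos]
      have h1 : t₀ ^ (a' + 1) = R := by
        rw [ht₀, ← Real.rpow_mul hR.le]
        rw [show e * (a' + 1) = 1 by rw [ha'def]; field_simp; rw [he]; ring]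
        exact Real.rpow_one R
      have h2 : a' + 1 = e⁻¹ := by
        calc a' + 1 = e⁻¹ * ((n : ℝ) + e) := by
              rw [ha'def, mul_add, inv_mul_cancel₀ hene]
          _ = e⁻¹ := by rw [show (n : ℝ) + e = 1 by rw [he]; ring, mul_one]
      rw [h1, h2]
      rw [div_eq_mul_inv, inv_inv, he]
      ring
    calc (∫⁻ t in Ioi t₀, μ0 {a : E' | t < ‖a‖ ^ e} ∂volume)
        ≤ ∫⁻ t in Ioi t₀, ENNReal.ofReal (t ^ a') * mB ∂volume :=
          setLIntegral_mono (by fun_prop) hb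
      _ = (∫⁻ t in Ioi t₀, ENNReal.ofReal (t ^ a') ∂volume) * mB :=
          lintegral_mul_const' mB _ hmBtop
      _ = ENNReal.ofReal (∫ t in Ioi t₀, t ^ a') * mB := by
          rw [ofReal_integral_eq_lintegral_ofReal (integrableOn_Ioi_rpow_of_lt ha' ht₀pos)
            ((ae_restrict_mem measurableSet_Ioi).mono fun t ht =>
              Real.rpow_nonneg (le_of_lt (ht₀pos.trans ht)) _)]
      _ = ENNReal.ofReal (R * ((n : ℝ) - 1)) * mB := by rw [hval]
  refine le_trans (add_le_add hp1 hp2) ?_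
  have : mB * ENNReal.ofReal R + ENNReal.ofReal (R * ((n : ℝ) - 1)) * mB
      = mB * ENNReal.ofReal ((n:ℝ) * R) := by
    rw [mul_comm (ENNReal.ofReal (R * ((n : ℝ) - 1))) mB, ← mul_add,
      ← ENNReal.ofReal_add hR.le (by nlinarith)]
    congr 1
    ring
  rw [this, ENNReal.ofReal_mul (by positivity), ← mul_assoc]

end Aux

open scoped NNReal ENNReal
set_option maxHeartbeats 4000000

/-- two-sided bound, linear in `β`, for the integral of the Riesz kernel
`|x-y|^{2-N}` over the part of the shifted graph surface `Σ_β` inside the ball `B(y, aβ)`,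
for `y` lying between the graph of `F` and `Σ_β`. The constants depend only on `κ, a, N`. -/
theorem stmt1 (n : ℕ) (hn : 3 ≤ n + 1) (κ a : ℝ) (hκ : 0 < κ)
    (ha : Real.sqrt (1 + κ ^ 2) < a) :
    ∃ c₁ c₂ : ℝ, 0 < c₁ ∧ 0 < c₂ ∧
      ∀ (F : EuclideanSpace ℝ (Fin n) → ℝ), LipschitzWith κ.toNNReal F →
      ∀ (β r : ℝ), 0 < β → 4 * a * β ≤ r →
      ∀ (y₁ : ℝ) (y' : EuclideanSpace ℝ (Fin n)),
        F y' < y₁ → y₁ < β + F y' → ‖y'‖ < r / 2 →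
        c₁ * β ≤
          (∫ x in ({x | ∃ x' : EuclideanSpace ℝ (Fin n), ‖x'‖ < r ∧ x = pt (β + F x') x'} ∩
              ball (pt y₁ y') (a * β)),
            ‖x - pt y₁ y'‖ ^ (2 - ((n : ℝ) + 1)) ∂(Measure.hausdorffMeasure (n : ℝ))) ∧
        (∫ x in ({x | ∃ x' : EuclideanSpace ℝ (Fin n), ‖x'‖ < r ∧ x = pt (β + F x') x'} ∩
              ball (pt y₁ y') (a * β)),
            ‖x - pt y₁ y'‖ ^ (2 - ((n : ℝ) + 1)) ∂(Measure.hausdorffMeasure (n : ℝ)))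
          ≤ c₂ * β := by
  have hn2 : 2 ≤ n := by omega
  have hn2' : (2 : ℝ) ≤ (n : ℝ) := by exact_mod_cast hn2
  have hn0 : (0 : ℝ) < n := by linarith
  have ha1 : 1 < a := by
    have h1 : (1 : ℝ) ≤ Real.sqrt (1 + κ ^ 2) := by
      nlinarith [Real.sq_sqrt (show (0:ℝ) ≤ 1 + κ ^ 2 by positivity),
        Real.sqrt_nonneg (1 + κ ^ 2), sq_nonneg κ]
    linarith
  have ha0 : 0 < a := by linarith
  haveI : Nontrivial (EuclideanSpace ℝ (Fin n)) := euclid_nontrivial (by omega)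
  set δ : ℝ := min 1 ((a ^ 2 - 1) / (2 * (1 + κ) ^ 2)) with hδdef
  have hδpos : 0 < δ := lt_min one_pos (div_pos (by nlinarith) (by positivity))
  have hδ1 : δ ≤ 1 := min_le_left _ _
  have hδkey : (1 + κ * δ) ^ 2 + δ ^ 2 < a ^ 2 := by
    have h2 : δ ≤ (a ^ 2 - 1) / (2 * (1 + κ) ^ 2) := min_le_right _ _
    have h3 : δ * (2 * (1 + κ) ^ 2) ≤ a ^ 2 - 1 := by
      rw [← le_div_iff₀ (by positivity)]; exact h2
    nlinarith [mul_nonneg (mul_nonneg hκ.le hκ.le) (mul_nonneg hδpos.le (sub_nonneg.2 hδ1)),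
      mul_nonneg hδpos.le (sub_nonneg.2 hδ1), mul_pos (sub_pos.2 ha1) (by linarith : (0:ℝ) < a + 1)]
  set Kl : ℝ≥0 := κ.toNNReal + 1 with hKldef
  set Kn : ℝ≥0 := (n : ℝ≥0) ^ ((1 / (2 : ℝ≥0∞)).toReal) with hKndef
  set mB : ℝ≥0∞ := volume (ball (0 : EuclideanSpace ℝ (Fin n)) 1) with hmBdef
  have hmB0 : mB ≠ 0 := (measure_ball_pos _ _ one_pos).ne'
  have hmBtop : mB ≠ ⊤ := measure_ball_lt_top.ne
  set e : ℝ := 2 - ((n : ℝ) + 1) with hedef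
  have hen : e = 1 - (n : ℝ) := by rw [hedef]; ring
  have hen0 : e < 0 := by rw [hen]; linarith
  set C₁ : ℝ≥0∞ := ENNReal.ofReal (a ^ e * δ ^ n) * mB with hC₁def
  set C₂ : ℝ≥0∞ := (Kl : ℝ≥0∞) ^ (n : ℝ) *
      ((Kn : ℝ≥0∞) ^ (n : ℝ) * (mB * ENNReal.ofReal n * ENNReal.ofReal a)) with hC₂def
  have hKlTop : ((Kl : ℝ≥0∞)) ^ (n : ℝ) ≠ ⊤ :=
    ENNReal.rpow_ne_top_of_nonneg (by positivity) ENNReal.coe_ne_top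
  have hKnTop : ((Kn : ℝ≥0∞)) ^ (n : ℝ) ≠ ⊤ :=
    ENNReal.rpow_ne_top_of_nonneg (by positivity) ENNReal.coe_ne_top
  have hKl0 : ((Kl : ℝ≥0∞)) ^ (n : ℝ) ≠ 0 := by
    refine (ENNReal.rpow_pos ?_ ENNReal.coe_ne_top).ne'
    rw [ENNReal.coe_pos, hKldef]
    positivity
  have hKn0 : ((Kn : ℝ≥0∞)) ^ (n : ℝ) ≠ 0 := by
    refine (ENNReal.rpow_pos ?_ ENNReal.coe_ne_top).ne'
    rw [ENNReal.coe_pos, hKndef]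
    have hnn : (0 : ℝ≥0) < (n : ℝ≥0) := by
      have : 0 < n := by omega
      exact_mod_cast this
    exact NNReal.rpow_pos hnn
  have hC₁top : C₁ ≠ ⊤ := ENNReal.mul_ne_top ENNReal.ofReal_ne_top hmBtop
  have hC₁0 : C₁ ≠ 0 := by
    rw [hC₁def]
    refine mul_ne_zero ?_ hmB0
    refine (ENNReal.ofReal_pos.mpr ?_).ne'
    have := Real.rpow_pos_of_pos ha0 e
    positivity
  have hC₂top : C₂ ≠ ⊤ :=
    ENNReal.mul_ne_top hKlTop (ENNReal.mul_ne_top hKnTop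
      (ENNReal.mul_ne_top (ENNReal.mul_ne_top hmBtop ENNReal.ofReal_ne_top)
        ENNReal.ofReal_ne_top))
  have hC₂0 : C₂ ≠ 0 := by
    refine mul_ne_zero hKl0 (mul_ne_zero hKn0 (mul_ne_zero (mul_ne_zero hmB0 ?_) ?_))
    · exact (ENNReal.ofReal_pos.mpr hn0).ne'
    · exact (ENNReal.ofReal_pos.mpr ha0).ne'
  refine ⟨C₁.toReal, C₂.toReal, ENNReal.toReal_pos hC₁0 hC₁top,
    ENNReal.toReal_pos hC₂0 hC₂top, ?_⟩
  intro F hF β r hβ hr y₁ y' hy1 hy2 hy'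
  have haβ : 0 < a * β := by positivity
  have hrpos : 0 < r := lt_of_lt_of_le (by positivity : (0:ℝ) < 4 * a * β) hr
  set y : EuclideanSpace ℝ (Fin (n + 1)) := pt y₁ y' with hydef
  set G : EuclideanSpace ℝ (Fin n) → EuclideanSpace ℝ (Fin (n + 1)) :=
    fun u => pt (β + F u) u with hGdef
  have hFlip : ∀ u v, |F u - F v| ≤ κ * ‖u - v‖ := by
    intro u v
    have h := hF.dist_le_mul u v
    rwa [Real.dist_eq, dist_eq_norm, Real.coe_toNNReal κ hκ.le] at h
  have hGsq : ∀ u v, ‖G u - G v‖ ^ 2 = (F u - F v) ^ 2 + ‖u - v‖ ^ 2 := by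
    intro u v
    show ‖pt (β + F u) u - pt (β + F v) v‖ ^ 2 = _
    rw [pt_sub, norm_pt_sq]
    ring_nf
  have hGy : ∀ u, ‖G u - y‖ ^ 2 = (β + F u - y₁) ^ 2 + ‖u - y'‖ ^ 2 := by
    intro u
    show ‖pt (β + F u) u - pt y₁ y'‖ ^ 2 = _
    rw [pt_sub, norm_pt_sq]
  have hsq_le : ∀ {s t : ℝ}, 0 ≤ s → 0 ≤ t → s ^ 2 ≤ t ^ 2 → s ≤ t := by
    intro s t hs ht h; nlinarith
  have hGlip : LipschitzWith Kl G := by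
    apply LipschitzWith.of_dist_le_mul
    intro u v
    have hcoe : ((Kl : ℝ≥0) : ℝ) = κ + 1 := by
      rw [hKldef]; push_cast; rw [Real.coe_toNNReal κ hκ.le]
    rw [dist_eq_norm, dist_eq_norm, hcoe]
    refine hsq_le (norm_nonneg _) (by positivity) ?_
    rw [hGsq]
    have h := hFlip u v
    nlinarith [norm_nonneg (u - v), sq_abs (F u - F v), abs_nonneg (F u - F v)]
  have hGanti : AntilipschitzWith 1 G := by
    apply AntilipschitzWith.of_le_mul_dist
    intro u v
    rw [dist_eq_norm, dist_eq_norm, NNReal.coe_one, one_mul]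
    refine hsq_le (norm_nonneg _) (norm_nonneg _) ?_
    rw [hGsq]; nlinarith [sq_nonneg (F u - F v)]
  have hGcont : Continuous G := hGlip.continuous
  have hGmeas : Measurable G := hGcont.measurable
  have hGemb : MeasurableEmbedding G := hGcont.measurableEmbedding hGanti.injective
  have hule : ∀ u, ‖u - y'‖ ≤ ‖G u - y‖ := by
    intro u
    refine hsq_le (norm_nonneg _) (norm_nonneg _) ?_
    rw [hGy]; nlinarith [sq_nonneg (β + F u - y₁)]
  have hGny : ∀ u, 0 < ‖G u - y‖ := by
    intro u
    rcases (norm_nonneg (G u - y)).eq_or_lt with h | h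
    · exfalso
      have h2 := hGy u
      rw [← h] at h2
      have h3 : ‖u - y'‖ = 0 := by
        nlinarith [sq_nonneg (β + F u - y₁), sq_nonneg ‖u - y'‖, norm_nonneg (u - y')]
      have h4 : u = y' := sub_eq_zero.mp (norm_eq_zero.mp h3)
      rw [h4] at h2
      simp only [sub_self, norm_zero] at h2
      nlinarith [hy2, mul_pos (show (0:ℝ) < β + F y' - y₁ by linarith)
        (show (0:ℝ) < β + F y' - y₁ by linarith)]
    · exact h
  have hSig : {x | ∃ x' : EuclideanSpace ℝ (Fin n), ‖x'‖ < r ∧ x = pt (β + F x') x'}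
      = G '' ball 0 r := by
    ext x
    simp only [Set.mem_setOf_eq, Set.mem_image, mem_ball_zero_iff]
    constructor
    · rintro ⟨u, hu, rfl⟩; exact ⟨u, hu, rfl⟩
    · rintro ⟨u, hu, rfl⟩; exact ⟨u, hu, rfl⟩
  rw [hSig]
  set S := (G '' ball 0 r) ∩ ball y (a * β) with hSdef
  have hS_sub : S ⊆ G '' ball y' (a * β) := by
    rintro x ⟨⟨u, _, rfl⟩, hxb⟩
    refine ⟨u, ?_, rfl⟩
    rw [mem_ball, dist_eq_norm] at hxb ⊢
    have h1 := hule u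
    linarith
  have hS_sup : G '' ball y' (δ * β) ⊆ S := by
    rintro x ⟨u, hu, rfl⟩
    rw [mem_ball, dist_eq_norm] at hu
    have hFu := hFlip u y'
    have hκδ : κ * ‖u - y'‖ < κ * (δ * β) := mul_lt_mul_of_pos_left hu hκ
    have hFub := abs_le.mp hFu
    constructor
    · refine ⟨u, ?_, rfl⟩
      rw [mem_ball_zero_iff]
      have h1 : ‖u‖ ≤ ‖y'‖ + ‖u - y'‖ := by
        calc ‖u‖ = ‖y' + (u - y')‖ := by rw [add_sub_cancel]
          _ ≤ ‖y'‖ + ‖u - y'‖ := norm_add_le _ _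
      have hβr : 4 * a * β ≤ r := hr
      have hδβ : δ * β ≤ β := by nlinarith
      have hβr4 : β ≤ r / 4 := by nlinarith
      linarith
    · rw [mem_ball, dist_eq_norm]
      have hup : β + F u - y₁ < β + κ * (δ * β) := by
        have h6 : F u - F y' ≤ κ * ‖u - y'‖ := hFub.2
        linarith
      have hlo : -(β + κ * (δ * β)) < β + F u - y₁ := by
        have h6 : -(κ * ‖u - y'‖) ≤ F u - F y' := hFub.1
        linarith
      have habs : (β + F u - y₁) ^ 2 ≤ (β * (1 + κ * δ)) ^ 2 := by
        nlinarith [hβ, mul_nonneg hκ.le hδpos.le]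
      have hsq : ‖G u - y‖ ^ 2 < (a * β) ^ 2 := by
        rw [hGy]
        have h7 : ‖u - y'‖ ^ 2 < (δ * β) ^ 2 := by
          nlinarith [norm_nonneg (u - y'), mul_pos hδpos hβ]
        nlinarith [mul_lt_mul_of_pos_left hδkey (mul_pos hβ hβ)]
      nlinarith [norm_nonneg (G u - y), haβ]
  -- lower measure bound
  have hm_lower : ENNReal.ofReal ((δ * β) ^ n) * mB
      ≤ Measure.hausdorffMeasure (n : ℝ) (G '' ball y' (δ * β)) := by
    have h1 : volume (ball y' (δ * β)) = ENNReal.ofReal ((δ * β) ^ n) * mB := by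
      rw [Measure.addHaar_ball _ _ (by positivity), finrank_euclideanSpace_fin]
    calc ENNReal.ofReal ((δ * β) ^ n) * mB = volume (ball y' (δ * β)) := h1.symm
      _ ≤ Measure.hausdorffMeasure (n : ℝ) (ball y' (δ * β)) :=
          Measure.le_iff.mp (vol_le_haus n) _ measurableSet_ball
      _ ≤ Measure.hausdorffMeasure (n : ℝ) (G '' ball y' (δ * β)) := by
          have h2 := hGanti.le_hausdorffMeasure_image (d := (n : ℝ)) (by positivity)
            (ball y' (δ * β))
          simpa using h2
  set g : EuclideanSpace ℝ (Fin (n + 1)) → ℝ≥0∞ :=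
    fun x => ENNReal.ofReal (‖x - y‖ ^ e) with hgdef
  have hgmeas : Measurable g := by fun_prop
  set L := ∫⁻ x in S, g x ∂(Measure.hausdorffMeasure (n : ℝ)) with hLdef
  -- lower bound for L
  have hgS : ∀ x ∈ S, ENNReal.ofReal ((a * β) ^ e) ≤ g x := by
    rintro x ⟨⟨u, _, rfl⟩, hxb⟩
    rw [mem_ball, dist_eq_norm] at hxb
    exact ENNReal.ofReal_le_ofReal
      (Real.rpow_le_rpow_of_nonpos (hGny u) hxb.le hen0.le)
  have hLlow : ENNReal.ofReal ((a * β) ^ e) * (ENNReal.ofReal ((δ * β) ^ n) * mB) ≤ L := by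
    calc ENNReal.ofReal ((a * β) ^ e) * (ENNReal.ofReal ((δ * β) ^ n) * mB)
        ≤ ENNReal.ofReal ((a * β) ^ e) *
            Measure.hausdorffMeasure (n : ℝ) (G '' ball y' (δ * β)) :=
          mul_le_mul_right hm_lower _
      _ = ∫⁻ _ in G '' ball y' (δ * β), ENNReal.ofReal ((a * β) ^ e)
            ∂(Measure.hausdorffMeasure (n : ℝ)) := (setLIntegral_const _ _).symm
      _ ≤ ∫⁻ x in G '' ball y' (δ * β), g x ∂(Measure.hausdorffMeasure (n : ℝ)) :=
          setLIntegral_mono hgmeas (fun x hx => hgS x (hS_sup hx))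
      _ ≤ L := lintegral_mono_set hS_sup
  -- upper bound for L
  set A := ball y' (a * β) with hAdef
  have hrestr : (Measure.hausdorffMeasure (n : ℝ) :
        Measure (EuclideanSpace ℝ (Fin (n + 1)))).restrict (G '' A)
      ≤ ((Kl : ℝ≥0∞) ^ (n : ℝ)) •
        Measure.map G ((Measure.hausdorffMeasure (n : ℝ) :
          Measure (EuclideanSpace ℝ (Fin n))).restrict A) := by
    rw [Measure.le_iff]
    intro s hs
    rw [Measure.restrict_apply hs, Measure.smul_apply, Measure.map_apply hGmeas hs,
      Measure.restrict_apply (hGmeas hs), smul_eq_mul]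
    calc Measure.hausdorffMeasure (n : ℝ) (s ∩ G '' A)
        ≤ Measure.hausdorffMeasure (n : ℝ) (G '' (G ⁻¹' s ∩ A)) := by
          apply measure_mono
          rintro x ⟨hxs, u, hu, rfl⟩
          exact ⟨u, ⟨hxs, hu⟩, rfl⟩
      _ ≤ (Kl : ℝ≥0∞) ^ (n : ℝ) * Measure.hausdorffMeasure (n : ℝ) (G ⁻¹' s ∩ A) :=
          hGlip.hausdorffMeasure_image_le (by positivity) _
  have hup2 : (∫⁻ x in G '' A, g x ∂(Measure.hausdorffMeasure (n : ℝ)))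
      ≤ (Kl : ℝ≥0∞) ^ (n : ℝ) *
        ∫⁻ u in A, g (G u) ∂(Measure.hausdorffMeasure (n : ℝ)) := by
    refine le_trans (lintegral_mono' hrestr le_rfl) ?_
    rw [lintegral_smul_measure, lintegral_map hgmeas hGmeas, smul_eq_mul]
  haveI : NoAtoms (Measure.hausdorffMeasure (n : ℝ) :
      Measure (EuclideanSpace ℝ (Fin n))) := MeasureTheory.Measure.noAtoms_hausdorff _ hn0
  have hup3 : (∫⁻ u in A, g (G u) ∂(Measure.hausdorffMeasure (n : ℝ)))
      ≤ ∫⁻ u in A, ENNReal.ofReal (‖u - y'‖ ^ e) ∂(Measure.hausdorffMeasure (n : ℝ)) := by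
    apply lintegral_mono_ae
    refine ae_restrict_of_ae ?_
    have hae : ∀ᵐ u ∂(Measure.hausdorffMeasure (n : ℝ) :
        Measure (EuclideanSpace ℝ (Fin n))), u ≠ y' := by
      refine ae_iff.mpr ?_
      simpa using measure_singleton (μ := (Measure.hausdorffMeasure (n : ℝ) :
        Measure (EuclideanSpace ℝ (Fin n)))) y'
    filter_upwards [hae] with u hu
    have hpos : 0 < ‖u - y'‖ := by
      rw [norm_pos_iff, sub_ne_zero]; exact hu
    exact ENNReal.ofReal_le_ofReal (Real.rpow_le_rpow_of_nonpos hpos (hule u) hen0.le)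
  have hup4 : (∫⁻ u in A, ENNReal.ofReal (‖u - y'‖ ^ e) ∂(Measure.hausdorffMeasure (n : ℝ)))
      ≤ (Kn : ℝ≥0∞) ^ (n : ℝ) * ∫⁻ u in A, ENNReal.ofReal (‖u - y'‖ ^ e) ∂volume := by
    have hle : (Measure.hausdorffMeasure (n : ℝ) :
        Measure (EuclideanSpace ℝ (Fin n))).restrict A
        ≤ (((Kn : ℝ≥0∞) ^ (n : ℝ)) • (volume :
            Measure (EuclideanSpace ℝ (Fin n)))).restrict A :=
      Measure.restrict_mono' (HasSubset.Subset.eventuallyLE subset_rfl) (haus_le_vol n)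
    refine le_trans (lintegral_mono' hle le_rfl) ?_
    rw [Measure.restrict_smul, lintegral_smul_measure, smul_eq_mul]
  have hup5 : (∫⁻ u in A, ENNReal.ofReal (‖u - y'‖ ^ e) ∂volume)
      ≤ mB * ENNReal.ofReal n * ENNReal.ofReal (a * β) := by
    rw [hAdef, translate_ball y' (a * β) e, hen]
    exact key_ball hn2 haβ
  have hLup : L ≤ C₂ * ENNReal.ofReal β := by
    calc L ≤ ∫⁻ x in G '' A, g x ∂(Measure.hausdorffMeasure (n : ℝ)) :=
          lintegral_mono_set hS_sub
      _ ≤ (Kl : ℝ≥0∞) ^ (n : ℝ) *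
          ((Kn : ℝ≥0∞) ^ (n : ℝ) * (mB * ENNReal.ofReal n * ENNReal.ofReal (a * β))) := by
          refine le_trans hup2 ?_
          gcongr
          exact le_trans hup3 (le_trans hup4 (by gcongr))
      _ = C₂ * ENNReal.ofReal β := by
          rw [hC₂def, ENNReal.ofReal_mul ha0.le]
          ring
  have hLtop : L ≠ ⊤ := by
    refine (lt_of_le_of_lt hLup ?_).ne
    exact ENNReal.mul_lt_top hC₂top.lt_top ENNReal.ofReal_lt_top
  -- identify the Bochner integral with L.toReal
  have hint_eq : (∫ x in S, ‖x - y‖ ^ e ∂(Measure.hausdorffMeasure (n : ℝ))) = L.toReal := by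
    rw [hLdef]
    exact integral_eq_lintegral_of_nonneg_ae
      (Filter.Eventually.of_forall fun x => Real.rpow_nonneg (norm_nonneg _) _)
      ((by fun_prop : Measurable fun x : EuclideanSpace ℝ (Fin (n + 1)) =>
        ‖x - y‖ ^ e).aestronglyMeasurable)
  have hb : β ^ e * β ^ (n : ℕ) = β := by
    rw [← Real.rpow_natCast β n, ← Real.rpow_add hβ,
      show e + (n : ℝ) = 1 by rw [hen]; ring, Real.rpow_one]
  have hre : (a * β) ^ e * (δ * β) ^ (n : ℕ) = a ^ e * δ ^ (n : ℕ) * β := by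
    rw [Real.mul_rpow ha0.le hβ.le, mul_pow]
    calc a ^ e * β ^ e * (δ ^ n * β ^ n) = a ^ e * δ ^ n * (β ^ e * β ^ n) := by ring
      _ = a ^ e * δ ^ n * β := by rw [hb]
  have hC₁β : C₁ * ENNReal.ofReal β
      = ENNReal.ofReal ((a * β) ^ e) * (ENNReal.ofReal ((δ * β) ^ n) * mB) := by
    have h8 : ENNReal.ofReal ((a * β) ^ e) * ENNReal.ofReal ((δ * β) ^ n)
        = ENNReal.ofReal (a ^ e * δ ^ n) * ENNReal.ofReal β := by
      rw [← ENNReal.ofReal_mul (Real.rpow_nonneg (by positivity) _), hre,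
        ENNReal.ofReal_mul (by positivity)]
    calc C₁ * ENNReal.ofReal β
        = ENNReal.ofReal (a ^ e * δ ^ n) * ENNReal.ofReal β * mB := by
          rw [hC₁def]; ring
      _ = ENNReal.ofReal ((a * β) ^ e) * ENNReal.ofReal ((δ * β) ^ n) * mB := by rw [h8]
      _ = ENNReal.ofReal ((a * β) ^ e) * (ENNReal.ofReal ((δ * β) ^ n) * mB) := by ring
  constructor
  · rw [hint_eq]
    have h1 : C₁ * ENNReal.ofReal β ≤ L := hC₁β ▸ hLlow
    calc C₁.toReal * β = (C₁ * ENNReal.ofReal β).toReal := by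
          simp [ENNReal.toReal_mul, ENNReal.toReal_ofReal hβ.le]
      _ ≤ L.toReal := ENNReal.toReal_mono hLtop h1
  · rw [hint_eq]
    calc L.toReal ≤ (C₂ * ENNReal.ofReal β).toReal :=
          ENNReal.toReal_mono
            (ENNReal.mul_lt_top hC₂top.lt_top ENNReal.ofReal_lt_top).ne hLup
      _ = C₂.toReal * β := by simp [ENNReal.toReal_mul, ENNReal.toReal_ofReal hβ.le]
end

section
/- Let F : ℝ^{N-1} → ℝ be κ-Lipschitz and let Σ = {(β+F(x'), x') : |x'| < r} with β > 0. Then for every y ∈ ℝ^N and a > 0, ∫_{Σ ∩ B(y, aβ)} |x−y|^{2−N} dH^{N−1}(x) ≤ C(κ, N) · a · β, i.e. the upper bound holds with constant linear in a. -/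
open MeasureTheory Metric

lemma sqrt_add_le' {a b : ℝ} (ha : 0 ≤ a) (hb : 0 ≤ b) :
    Real.sqrt (a + b) ≤ Real.sqrt a + Real.sqrt b := by
  have h : a + b ≤ (Real.sqrt a + Real.sqrt b) ^ 2 := by
    nlinarith [Real.sq_sqrt ha, Real.sq_sqrt hb, Real.sqrt_nonneg a, Real.sqrt_nonneg b]
  calc Real.sqrt (a + b) ≤ Real.sqrt ((Real.sqrt a + Real.sqrt b) ^ 2) := Real.sqrt_le_sqrt h
    _ = Real.sqrt a + Real.sqrt b := Real.sqrt_sq (by positivity)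

lemma measurable_riesz {n : ℕ} (y : EuclideanSpace ℝ (Fin n)) {e : ℝ} (he : e ≠ 0) :
    Measurable (fun x : EuclideanSpace ℝ (Fin n) => ‖x - y‖ ^ e) := by
  have hg : Measurable (fun t : ℝ => if t = 0 then (0:ℝ) else Real.exp (Real.log t * e)) := by
    refine Measurable.ite ?_ measurable_const ((Real.measurable_log.mul measurable_const).exp)
    simpa using (measurableSet_singleton (0:ℝ))
  have heq : (fun x : EuclideanSpace ℝ (Fin n) => ‖x - y‖ ^ e)
      = (fun t : ℝ => if t = 0 then (0:ℝ) else Real.exp (Real.log t * e)) ∘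
        (fun x => ‖x - y‖) := by
    funext x
    rcases eq_or_lt_of_le (norm_nonneg (x - y)) with h0 | hpos
    · simp [← h0, Real.zero_rpow he]
    · simp only [Function.comp_apply, if_neg (ne_of_gt hpos)]
      rw [Real.rpow_def_of_pos hpos]
  rw [heq]
  exact hg.comp ((measurable_id.sub_const y).norm)

lemma exists_annulus {R d : ℝ} (hd : 0 < d) (hdR : d < R) :
    ∃ k : ℕ, R / 2 ^ (k + 1) ≤ d ∧ d < R / 2 ^ k := by
  have hR : 0 < R := hd.trans hdR
  have hex : ∃ m : ℕ, R / 2 ^ (m + 1) ≤ d := by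
    obtain ⟨m, hm⟩ := pow_unbounded_of_one_lt (R / d) (one_lt_two (α := ℝ))
    refine ⟨m, ?_⟩
    rw [div_lt_iff₀ hd] at hm
    rw [div_le_iff₀ (by positivity)]
    have h2 : (2:ℝ) ^ m ≤ 2 ^ (m + 1) := by
      apply pow_le_pow_right₀ (by norm_num) (by omega)
    nlinarith [pow_pos (zero_lt_two (α := ℝ)) m]
  refine ⟨Nat.find hex, Nat.find_spec hex, ?_⟩
  rcases Nat.eq_zero_or_pos (Nat.find hex) with h0 | hpos
  · rw [h0]; simpa using hdR
  · have hmin := Nat.find_min hex (Nat.sub_lt hpos one_pos)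
    have hk1 : Nat.find hex - 1 + 1 = Nat.find hex := Nat.succ_pred_eq_of_pos hpos
    rw [hk1] at hmin
    exact not_le.mp hmin

lemma dist_tail_le (n : ℕ) (u v : EuclideanSpace ℝ (Fin (n + 1))) :
    dist (α := EuclideanSpace ℝ (Fin n)) (WithLp.toLp 2 fun j : Fin n => u j.succ) (WithLp.toLp 2 fun j : Fin n => v j.succ) ≤ dist u v := by
  calc dist (α := EuclideanSpace ℝ (Fin n)) (WithLp.toLp 2 fun j : Fin n => u j.succ) (WithLp.toLp 2 fun j : Fin n => v j.succ)
      = Real.sqrt (∑ j : Fin n, dist (u j.succ) (v j.succ) ^ 2) :=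
        EuclideanSpace.dist_eq _ _
    _ ≤ Real.sqrt (∑ i : Fin (n + 1), dist (u i) (v i) ^ 2) := by
        apply Real.sqrt_le_sqrt
        rw [Fin.sum_univ_succ]
        exact le_add_of_nonneg_left (by positivity)
    _ = dist u v := (EuclideanSpace.dist_eq u v).symm

lemma real_id {R : ℝ} (hR : 0 < R) (n k : ℕ) :
    (R / 2 ^ (k + 1)) ^ (2 - ((n : ℝ) + 1)) * (2 * (R / 2 ^ k)) ^ n
      = 4 ^ n * R / 2 * (1 / 2 : ℝ) ^ k := by
  set ρ : ℝ := R / 2 ^ (k + 1) with hρdef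
  have hρ : (0:ℝ) < ρ := by positivity
  have h2 : 2 * (R / 2 ^ k) = 4 * ρ := by
    rw [hρdef, pow_succ]; field_simp; ring
  rw [h2, mul_pow,
    show ρ ^ (2 - ((n:ℝ) + 1)) * ((4:ℝ) ^ n * ρ ^ n) = 4 ^ n * (ρ ^ (2 - ((n:ℝ) + 1)) * ρ ^ (n:ℕ)) from by ring,
    ← Real.rpow_natCast ρ n, ← Real.rpow_add hρ,
    show 2 - ((n:ℝ) + 1) + (n:ℕ) = 1 from by push_cast; ring, Real.rpow_one, hρdef, pow_succ]
  field_simp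
  ring_nf
  rw [← mul_pow]; norm_num

lemma graph_lip {n : ℕ} {κ : ℝ} (hκ : 0 < κ) {F : EuclideanSpace ℝ (Fin n) → ℝ}
    (hF : LipschitzWith κ.toNNReal F) (β : ℝ) :
    LipschitzWith (κ + 1).toNNReal (fun u => pt (β + F u) u) := by
  apply LipschitzWith.of_dist_le_mul
  intro u v
  have hsum : ∑ j : Fin n, dist (u j) (v j) ^ 2 = dist u v ^ 2 := by
    rw [EuclideanSpace.dist_eq, Real.sq_sqrt (by positivity)]
  have h1 : dist (pt (β + F u) u) (pt (β + F v) v)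
      = Real.sqrt (dist (β + F u) (β + F v) ^ 2 + ∑ j : Fin n, dist (u j) (v j) ^ 2) := by
    rw [EuclideanSpace.dist_eq, Fin.sum_univ_succ]; rfl
  have hdF : dist (β + F u) (β + F v) = dist (F u) (F v) := dist_add_left _ _ _
  have hFlip : dist (F u) (F v) ≤ κ * dist u v := by
    have h := hF.dist_le_mul u v
    rwa [Real.coe_toNNReal κ hκ.le] at h
  rw [h1, hsum, hdF, Real.coe_toNNReal _ (by positivity)]
  have h2 : Real.sqrt (dist (F u) (F v) ^ 2 + dist u v ^ 2)
      ≤ Real.sqrt (dist (F u) (F v) ^ 2) + Real.sqrt (dist u v ^ 2) :=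
    sqrt_add_le' (by positivity) (by positivity)
  rw [Real.sqrt_sq dist_nonneg, Real.sqrt_sq dist_nonneg] at h2
  nlinarith [dist_nonneg (x := u) (y := v)]

noncomputable def Kc (κ : ℝ) (n : ℕ) : NNReal :=
  (κ + 1).toNNReal * (Fintype.card (Fin n) : NNReal) ^ ((1 / (2 : ENNReal)).toReal)

lemma graph_measure_bound {n : ℕ} {κ : ℝ} (hκ : 0 < κ) {F : EuclideanSpace ℝ (Fin n) → ℝ}
    (hF : LipschitzWith κ.toNNReal F) (β : ℝ) (y : EuclideanSpace ℝ (Fin (n + 1)))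
    (S : Set (EuclideanSpace ℝ (Fin (n + 1))))
    (hS : S ⊆ {x | ∃ x', x = pt (β + F x') x'}) {ρ : ℝ} (hρ : 0 < ρ) :
    μH[(n : ℝ)] (S ∩ ball y ρ)
      ≤ (Kc κ n : ENNReal) ^ (n : ℝ) * ENNReal.ofReal ((2 * ρ) ^ n) := by
  set e2 := WithLp.equiv 2 (Fin n → ℝ) with he2
  have hsymm : LipschitzWith ((Fintype.card (Fin n) : NNReal) ^ ((1 / (2 : ENNReal)).toReal))
      (⇑e2.symm) :=
    (PiLp.antilipschitzWith_ofLp 2 _).to_rightInverse e2.right_inv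
  have hH : LipschitzWith (Kc κ n) ((fun u => pt (β + F u) u) ∘ ⇑e2.symm) :=
    (graph_lip hκ hF β).comp hsymm
  set y' : EuclideanSpace ℝ (Fin n) := (WithLp.toLp 2 fun j : Fin n => y j.succ) with hy'
  have hsub : S ∩ ball y ρ ⊆ ((fun u => pt (β + F u) u) ∘ ⇑e2.symm) '' (ball (e2 y') ρ) := by
    rintro x ⟨hxS, hxb⟩
    obtain ⟨x', rfl⟩ := hS hxS
    refine ⟨e2 x', ?_, by simp⟩
    rw [mem_ball]
    calc dist (e2 x') (e2 y')
        ≤ dist x' y' := by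
          have h := (PiLp.lipschitzWith_ofLp 2 (fun _ : Fin n => ℝ)).dist_le_mul x' y'
          simp only [NNReal.coe_one, one_mul] at h; exact h
      _ = dist (α := EuclideanSpace ℝ (Fin n))
            (WithLp.toLp 2 fun j : Fin n => pt (β + F x') x' j.succ) (WithLp.toLp 2 fun j : Fin n => y j.succ) := rfl
      _ ≤ dist (pt (β + F x') x') y := dist_tail_le n _ y
      _ < ρ := mem_ball.mp hxb
  calc μH[(n : ℝ)] (S ∩ ball y ρ)
      ≤ μH[(n : ℝ)] (((fun u => pt (β + F u) u) ∘ ⇑e2.symm) '' (ball (e2 y') ρ)) :=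
        measure_mono hsub
    _ ≤ (Kc κ n : ENNReal) ^ (n : ℝ) * μH[(n : ℝ)] (ball (e2 y') ρ) :=
        hH.hausdorffMeasure_image_le (by positivity) _
    _ = (Kc κ n : ENNReal) ^ (n : ℝ) * ENNReal.ofReal ((2 * ρ) ^ n) := by
        rw [show ((n : ℝ)) = ((Fintype.card (Fin n) : ℕ) : ℝ) by simp, hausdorffMeasure_pi_real,
          Real.volume_pi_ball _ hρ]
        simp

/-- the integral of the Riesz kernel `|x-y|^{2-N}` over the part of a
κ-Lipschitz graph surface inside a ball of radius `aβ` is at most `C(κ,N)·a·β`,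
uniformly in the center `y`, in `β > 0` and in `a > 0`. -/
theorem stmt2 (n : ℕ) (hn : 3 ≤ n + 1) (κ : ℝ) (hκ : 0 < κ) :
    ∃ C : ℝ, 0 < C ∧
      ∀ (F : EuclideanSpace ℝ (Fin n) → ℝ), LipschitzWith κ.toNNReal F →
      ∀ (β r a : ℝ), 0 < β → 0 < a →
      ∀ y : EuclideanSpace ℝ (Fin (n + 1)),
        (∫ x in ({x | ∃ x' : EuclideanSpace ℝ (Fin n), ‖x'‖ < r ∧ x = pt (β + F x') x'} ∩
            ball y (a * β)),
          ‖x - y‖ ^ (2 - ((n : ℝ) + 1)) ∂(Measure.hausdorffMeasure (n : ℝ)))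
        ≤ C * a * β := by
  have hn2 : 2 ≤ n := by omega
  set Ctot : ENNReal := (Kc κ n : ENNReal) ^ (n : ℝ) * ENNReal.ofReal ((4 : ℝ) ^ n) with hCtot
  have hCtop : Ctot ≠ ⊤ :=
    ENNReal.mul_ne_top (ENNReal.rpow_ne_top_of_nonneg (by positivity) ENNReal.coe_ne_top)
      ENNReal.ofReal_ne_top
  refine ⟨Ctot.toReal + 1, by positivity, ?_⟩
  intro F hF β r a hβ ha y
  have hn2' : (2 : ℝ) ≤ n := by exact_mod_cast hn2
  have heneg : 2 - ((n : ℝ) + 1) ≤ 0 := by linarith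
  have he0 : 2 - ((n : ℝ) + 1) ≠ 0 := by intro h; linarith
  set R := a * β with hRdef
  have hRpos : 0 < R := by positivity
  set S : Set (EuclideanSpace ℝ (Fin (n + 1))) :=
    {x | ∃ x' : EuclideanSpace ℝ (Fin n), ‖x'‖ < r ∧ x = pt (β + F x') x'} with hSdef
  have hSsub : S ⊆ {x | ∃ x', x = pt (β + F x') x'} := by
    rintro x ⟨x', _, hx⟩; exact ⟨x', hx⟩
  set T := S ∩ ball y R with hTdef
  have hint : ∫ x in T, ‖x - y‖ ^ (2 - ((n : ℝ) + 1)) ∂μH[(n : ℝ)]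
      = (∫⁻ x in T, ENNReal.ofReal (‖x - y‖ ^ (2 - ((n : ℝ) + 1))) ∂μH[(n : ℝ)]).toReal :=
    integral_eq_lintegral_of_nonneg_ae
      (Filter.Eventually.of_forall fun x => Real.rpow_nonneg (norm_nonneg _) _)
      (measurable_riesz y he0).aestronglyMeasurable
  set A : ℕ → Set (EuclideanSpace ℝ (Fin (n + 1))) :=
    fun k => ball y (R / 2 ^ k) \ ball y (R / 2 ^ (k + 1)) with hAdef
  have hcover : T ⊆ {y} ∪ ⋃ k, (A k ∩ T) := by
    intro x hx
    rcases eq_or_ne x y with rfl | hxy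
    · exact Or.inl rfl
    · refine Or.inr (Set.mem_iUnion.mpr ?_)
      have hd0 : 0 < dist x y := dist_pos.mpr hxy
      have hdR : dist x y < R := mem_ball.mp hx.2
      obtain ⟨k, h1, h2⟩ := exists_annulus hd0 hdR
      exact ⟨k, ⟨⟨mem_ball.mpr h2, fun hc => absurd (mem_ball.mp hc) (not_lt.mpr h1)⟩, hx⟩⟩
  have termbound : ∀ k : ℕ,
      ∫⁻ x in A k ∩ T, ENNReal.ofReal (‖x - y‖ ^ (2 - ((n : ℝ) + 1))) ∂μH[(n : ℝ)]
        ≤ ((Kc κ n : ENNReal) ^ (n : ℝ) * ENNReal.ofReal ((4 : ℝ) ^ n * R / 2))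
            * (2⁻¹ : ENNReal) ^ k := by
    intro k
    have hρk : (0 : ℝ) < R / 2 ^ k := by positivity
    have hρk1 : (0 : ℝ) < R / 2 ^ (k + 1) := by positivity
    calc ∫⁻ x in A k ∩ T, ENNReal.ofReal (‖x - y‖ ^ (2 - ((n : ℝ) + 1))) ∂μH[(n : ℝ)]
        ≤ ∫⁻ _x in A k ∩ T,
            ENNReal.ofReal ((R / 2 ^ (k + 1)) ^ (2 - ((n : ℝ) + 1))) ∂μH[(n : ℝ)] := by
          refine setLIntegral_mono measurable_const fun x hx => ?_
          apply ENNReal.ofReal_le_ofReal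
          refine Real.rpow_le_rpow_of_nonpos hρk1 ?_ heneg
          have hx2 := hx.1.2
          rw [mem_ball, not_lt, dist_eq_norm] at hx2
          exact hx2
      _ = ENNReal.ofReal ((R / 2 ^ (k + 1)) ^ (2 - ((n : ℝ) + 1))) * μH[(n : ℝ)] (A k ∩ T) :=
          setLIntegral_const _ _
      _ ≤ ENNReal.ofReal ((R / 2 ^ (k + 1)) ^ (2 - ((n : ℝ) + 1)))
            * ((Kc κ n : ENNReal) ^ (n : ℝ) * ENNReal.ofReal ((2 * (R / 2 ^ k)) ^ n)) := by
          apply mul_le_mul_right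
          refine le_trans (measure_mono ?_) (graph_measure_bound hκ hF β y S hSsub hρk)
          rintro x ⟨hxA, hxT⟩; exact ⟨hxT.1, hxA.1⟩
      _ = ((Kc κ n : ENNReal) ^ (n : ℝ) * ENNReal.ofReal ((4 : ℝ) ^ n * R / 2))
            * (2⁻¹ : ENNReal) ^ k := by
          rw [show ENNReal.ofReal ((R / 2 ^ (k + 1)) ^ (2 - ((n : ℝ) + 1)))
                * ((Kc κ n : ENNReal) ^ (n : ℝ) * ENNReal.ofReal ((2 * (R / 2 ^ k)) ^ n))
              = (Kc κ n : ENNReal) ^ (n : ℝ)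
                * (ENNReal.ofReal ((R / 2 ^ (k + 1)) ^ (2 - ((n : ℝ) + 1)))
                  * ENNReal.ofReal ((2 * (R / 2 ^ k)) ^ n)) from by ring,
            ← ENNReal.ofReal_mul (Real.rpow_nonneg hρk1.le _), real_id hRpos n k,
            ENNReal.ofReal_mul (by positivity), ENNReal.ofReal_pow (by norm_num),
            show ENNReal.ofReal (1 / 2 : ℝ) = 2⁻¹ from by
              rw [one_div, ENNReal.ofReal_inv_of_pos two_pos, ENNReal.ofReal_ofNat],
            ← mul_assoc]
  have hlin : ∫⁻ x in T, ENNReal.ofReal (‖x - y‖ ^ (2 - ((n : ℝ) + 1))) ∂μH[(n : ℝ)]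
      ≤ Ctot * ENNReal.ofReal R := by
    calc ∫⁻ x in T, ENNReal.ofReal (‖x - y‖ ^ (2 - ((n : ℝ) + 1))) ∂μH[(n : ℝ)]
        ≤ ∫⁻ x in {y} ∪ ⋃ k, (A k ∩ T),
            ENNReal.ofReal (‖x - y‖ ^ (2 - ((n : ℝ) + 1))) ∂μH[(n : ℝ)] :=
          lintegral_mono_set hcover
      _ ≤ (∫⁻ x in {y}, ENNReal.ofReal (‖x - y‖ ^ (2 - ((n : ℝ) + 1))) ∂μH[(n : ℝ)])
            + ∫⁻ x in ⋃ k, (A k ∩ T),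
                ENNReal.ofReal (‖x - y‖ ^ (2 - ((n : ℝ) + 1))) ∂μH[(n : ℝ)] :=
          lintegral_union_le _ _ _
      _ ≤ 0 + ∑' k, ∫⁻ x in A k ∩ T,
            ENNReal.ofReal (‖x - y‖ ^ (2 - ((n : ℝ) + 1))) ∂μH[(n : ℝ)] := by
          refine add_le_add ?_ (lintegral_iUnion_le _ _)
          rw [lintegral_singleton]
          simp [Real.zero_rpow he0]
      _ = ∑' k, ∫⁻ x in A k ∩ T,
            ENNReal.ofReal (‖x - y‖ ^ (2 - ((n : ℝ) + 1))) ∂μH[(n : ℝ)] := zero_add _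
      _ ≤ ∑' k, ((Kc κ n : ENNReal) ^ (n : ℝ) * ENNReal.ofReal ((4 : ℝ) ^ n * R / 2))
            * (2⁻¹ : ENNReal) ^ k := ENNReal.tsum_le_tsum termbound
      _ = ((Kc κ n : ENNReal) ^ (n : ℝ) * ENNReal.ofReal ((4 : ℝ) ^ n * R / 2))
            * (1 - 2⁻¹ : ENNReal)⁻¹ := by
          rw [ENNReal.tsum_mul_left, ENNReal.tsum_geometric]
      _ = Ctot * ENNReal.ofReal R := by
          rw [ENNReal.one_sub_inv_two, inv_inv, hCtot,
            show ((2 : ENNReal)) = ENNReal.ofReal (2 : ℝ) from (ENNReal.ofReal_ofNat 2).symm,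
            mul_assoc, ← ENNReal.ofReal_mul (by positivity),
            show (4 : ℝ) ^ n * R / 2 * 2 = 4 ^ n * R from by ring,
            ENNReal.ofReal_mul (by positivity), ← mul_assoc]
  rw [hint]
  have hfin := ENNReal.toReal_mono (ENNReal.mul_ne_top hCtop ENNReal.ofReal_ne_top) hlin
  rw [ENNReal.toReal_mul, ENNReal.toReal_ofReal hRpos.le] at hfin
  calc (∫⁻ x in T, ENNReal.ofReal (‖x - y‖ ^ (2 - ((n : ℝ) + 1))) ∂μH[(n : ℝ)]).toReal
      ≤ Ctot.toReal * R := hfin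
    _ ≤ (Ctot.toReal + 1) * R := by
        apply mul_le_mul_of_nonneg_right (by linarith) hRpos.le
    _ = (Ctot.toReal + 1) * a * β := by rw [hRdef, mul_assoc]
end
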